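/- Let I : D ⥤ C be a fully faithful dense functor and let b be an object of C. Then the induced functor J : (I ↓ b) → C/b — from the comma category whose objects are pairs (d, f : I d → b) and whose morphisms (d, f) → (d′, f′) are morphisms g : d → d′ of D with f′ ∘ I g = f, to the slice category C/b, sending an object (d, f) to the object (I d, f) and a morphism g to I g — is dense. -/

import Mathlib

open CategoryTheory CategoryTheory.Limits

universe v₁ u₁ v₂ u₂

/-- The nerve functor of `F : D ⥤ C`, i.e. the restriction of the Yoneda embedding of `C`
along `F`, sending `c` to `C(F -, c)`. -/
def nerveFunctor' {D : Type u₁} [Category.{v₁} D] {C : Type u₂} [Category.{v₂} C]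
    (F : D ⥤ C) : C ⥤ Dᵒᵖ ⥤ Type v₂ :=
  yoneda ⋙ (Functor.whiskeringLeft Dᵒᵖ Cᵒᵖ (Type v₂)).obj F.op

/-- A functor is *dense* if its nerve functor is fully faithful. -/
def IsDenseFunctor {D : Type u₁} [Category.{v₁} D] {C : Type u₂} [Category.{v₂} C]
    (F : D ⥤ C) : Prop :=
  (nerveFunctor' F).Full ∧ (nerveFunctor' F).Faithful

section Aux

variable {D : Type u₁} [Category.{v₁} D] {C : Type u₂} [Category.{v₂} C]
    (I : D ⥤ C) (b : C)

@[simp]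
lemma nerveFunctor'_obj_obj (c : C) (d : Dᵒᵖ) :
    ((nerveFunctor' I).obj c).obj d = (I.obj d.unop ⟶ c) := rfl

lemma nerveFunctor'_obj_map (c : C) {d d' : Dᵒᵖ} (w : d ⟶ d') (h : I.obj d.unop ⟶ c) :
    ((nerveFunctor' I).obj c).map w h = I.map w.unop ≫ h := rfl

lemma nerveFunctor'_map_app {c c' : C} (k : c ⟶ c') (d : Dᵒᵖ) (h : I.obj d.unop ⟶ c) :
    ((nerveFunctor' I).map k).app d h = h ≫ k := rfl

end Aux

/-- Statement 17: if `I : D ⥤ C` is a fully faithful dense functor and `b : C`, then the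
induced functor `(I ↓ b) ⥤ C/b` from the comma category to the slice category is dense. -/
theorem denseFunctor_comma_to_slice
    {D : Type u₁} [Category.{v₁} D] {C : Type u₂} [Category.{v₂} C]
    (I : D ⥤ C) [I.Full] [I.Faithful] (hI : IsDenseFunctor I) (b : C) :
    IsDenseFunctor (CostructuredArrow.toOver I b) := by
  obtain ⟨hFull, hFaithful⟩ := hI
  set J := CostructuredArrow.toOver I b with hJ
  constructor
  · refine ⟨fun {f g} α => ?_⟩
    -- the component family
    let A : ∀ {d : D}, (I.obj d ⟶ f.left) → (I.obj d ⟶ g.left) :=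
      fun {d} h =>
        (α.app (Opposite.op (CostructuredArrow.mk (h ≫ f.hom))) (Over.homMk h rfl)).left
    -- naturality of A
    have hA_nat : ∀ {d d' : D} (w : d' ⟶ d) (h : I.obj d ⟶ f.left),
        A (I.map w ≫ h) = I.map w ≫ A h := by
      intro d d' w h
      let m : CostructuredArrow.mk ((I.map w ≫ h) ≫ f.hom) ⟶
          CostructuredArrow.mk (h ≫ f.hom) := CostructuredArrow.homMk w (by simp)
      have hnat := NatTrans.naturality_apply α m.op (Over.homMk h rfl)
      have h1 : ((nerveFunctor' J).obj f).map m.op (Over.homMk h rfl) =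
          Over.homMk (I.map w ≫ h) rfl := by
        apply Over.OverMorphism.ext
        rfl
      rw [h1] at hnat
      have := congrArg CommaMorphism.left hnat
      exact this
    -- A computes α on arbitrary objects
    have hA : ∀ (X : CostructuredArrow I b) (p : J.obj X ⟶ f),
        (α.app (Opposite.op X) p).left = A p.left := by
      intro X p
      have hw : p.left ≫ f.hom = X.hom := Over.w p
      let m : CostructuredArrow.mk (p.left ≫ f.hom) ⟶ X :=
        CostructuredArrow.homMk (𝟙 X.left) (by simp; exact hw.symm)
      have hnat := NatTrans.naturality_apply α m.op p
      have h1 : ((nerveFunctor' J).obj f).map m.op p =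
          (Over.homMk p.left rfl : Over.mk (p.left ≫ f.hom) ⟶ f) := by
        apply Over.OverMorphism.ext
        show I.map (𝟙 X.left) ≫ p.left = p.left
        rw [I.map_id]
        exact Category.id_comp _
      rw [h1] at hnat
      have := congrArg CommaMorphism.left hnat
      refine Eq.trans ?_ this.symm
      show _ = I.map (𝟙 X.left) ≫ (α.app (Opposite.op X) p).left
      rw [I.map_id]
      exact (Category.id_comp _).symm
    -- build the natural transformation between nerves over I
    let β : (nerveFunctor' I).obj f.left ⟶ (nerveFunctor' I).obj g.left :=
      { app := fun d => TypeCat.ofHom (fun h => A h)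
        naturality := by
          intro d d' w
          ext h
          exact hA_nat w.unop h }
    obtain ⟨k, hk⟩ := hFull.map_surjective β
    have hk' : ∀ {d : D} (h : I.obj d ⟶ f.left), h ≫ k = A h := by
      intro d h
      have := ConcreteCategory.congr_hom (NatTrans.congr_app hk (Opposite.op d)) h
      exact this
    -- k is a morphism over b
    have hkb : k ≫ g.hom = f.hom := by
      apply hFaithful.map_injective
      ext d h
      have h2 : A h ≫ g.hom = h ≫ f.hom :=
        Over.w (α.app (Opposite.op (CostructuredArrow.mk (h ≫ f.hom))) (Over.homMk h rfl))
      change h ≫ (k ≫ g.hom) = h ≫ f.hom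
      exact (Category.assoc h k g.hom).symm.trans ((congrArg (· ≫ g.hom) (hk' h)).trans h2)
    refine ⟨Over.homMk k hkb, ?_⟩
    ext X p
    apply Over.OverMorphism.ext
    have := hA X.unop p
    show p.left ≫ k = _
    exact (hk' p.left).trans this.symm
  · constructor
    intro f g p q hpq
    apply Over.OverMorphism.ext
    apply hFaithful.map_injective
    ext d h
    have := congrFun (congrArg (fun t => t.app
      (Opposite.op (CostructuredArrow.mk (h ≫ f.hom)))) hpq) (Over.homMk h rfl)
    have := congrArg CommaMorphism.left this
    exact this
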